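/- Let N ≥ 1, r ≥ 1, s ≥ 0 be integers, let ε, ε₁, …, ε_s ∈ {−1, 1}, and let k₁, …, k_s be integers with 1 ≤ k_j < N. Define f : ℝ^r × ℝ^s → ℝ by f(x, y) = ε·∑_{i=1}^r x_i^(2^N) + ∑_{j=1}^s ε_j y_j^(2^{k_j}). Then there is a bijection between the set {(x, y) ∈ ℝ^r × ℝ^s : f(x, y) = 0} and the disjoint union of (ℝ^r ∖ {0}) × {z ∈ ℝ^s : ε + ∑_{j=1}^s ε_j z_j^(2^{k_j}) = 0} and {y ∈ ℝ^s : ∑_{j=1}^s ε_j y_j^(2^{k_j}) = 0}. -/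

import Mathlib

/-- The zero fiber of `f(x, y) = ε·∑ x_i^(2^N) + ∑ ε_j y_j^(2^{k_j})` is in
bijection with the disjoint union of
`(ℝ^r ∖ {0}) × {z : ε + ∑ ε_j z_j^(2^{k_j}) = 0}` and
`{y : ∑ ε_j y_j^(2^{k_j}) = 0}`. -/
theorem equiv_zero_fiber_scaled (N r s : ℕ) (hN : 1 ≤ N) (hr : 1 ≤ r)
    (ε : ℝ) (hε : ε = 1 ∨ ε = -1)
    (εv : Fin s → ℝ) (hεv : ∀ j, εv j = 1 ∨ εv j = -1)
    (k : Fin s → ℕ) (hk : ∀ j, 1 ≤ k j ∧ k j < N) :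
    Nonempty
      ({p : (Fin r → ℝ) × (Fin s → ℝ) |
          ε * ∑ i, p.1 i ^ (2 ^ N) + ∑ j, εv j * p.2 j ^ (2 ^ (k j)) = 0} ≃
        ({x : Fin r → ℝ // x ≠ 0} ×
            {z : Fin s → ℝ | ε + ∑ j, εv j * z j ^ (2 ^ (k j)) = 0}) ⊕
          {y : Fin s → ℝ | ∑ j, εv j * y j ^ (2 ^ (k j)) = 0}) := by
  classical
  have hNe : (2:ℕ)^N ≠ 0 := pow_ne_zero _ two_ne_zero
  have hEven : Even ((2:ℕ)^N) := ⟨2^(N-1), by rw [← two_mul, ← pow_succ']; congr 1; omega⟩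
  have hSnn : ∀ x : Fin r → ℝ, 0 ≤ ∑ i, x i ^ (2^N) :=
    fun x => Finset.sum_nonneg fun i _ => hEven.pow_nonneg _
  have hSpos : ∀ x : Fin r → ℝ, x ≠ 0 → 0 < ∑ i, x i ^ (2^N) := by
    intro x hx
    obtain ⟨i, hi⟩ : ∃ i, x i ≠ 0 := by
      by_contra h; push_neg at h; exact hx (funext h)
    exact Finset.sum_pos' (fun i _ => hEven.pow_nonneg _)
      ⟨i, Finset.mem_univ i, hEven.pow_pos hi⟩
  set t : (Fin r → ℝ) → Fin s → ℝ :=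
    fun x j => (∑ i, x i ^ (2^N)) ^ (((2:ℝ) ^ (k j))⁻¹) with ht
  have htpos : ∀ x, x ≠ 0 → ∀ j, 0 < t x j :=
    fun x hx j => Real.rpow_pos_of_pos (hSpos x hx) _
  have htkey : ∀ x, x ≠ 0 → ∀ j, (t x j) ^ (2 ^ (k j)) = ∑ i, x i ^ (2^N) := by
    intro x hx j
    rw [ht]
    rw [← Real.rpow_natCast _ (2 ^ (k j)), ← Real.rpow_mul (hSpos x hx).le,
      show ((2:ℝ)^(k j))⁻¹ * ((2^(k j) : ℕ) : ℝ) = 1 by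
        push_cast; field_simp,
      Real.rpow_one]
  have hmemz : ∀ (p : (Fin r → ℝ) × (Fin s → ℝ)),
      ε * ∑ i, p.1 i ^ (2^N) + ∑ j, εv j * p.2 j ^ (2^(k j)) = 0 → p.1 ≠ 0 →
      ε + ∑ j, εv j * (p.2 j / t p.1 j) ^ (2^(k j)) = 0 := by
    intro p hp hx
    have hc := hSpos p.1 hx
    have hsum : ∑ j, εv j * (p.2 j / t p.1 j) ^ (2^(k j))
        = (∑ j, εv j * p.2 j ^ (2^(k j))) / (∑ i, p.1 i ^ (2^N)) := by
      rw [Finset.sum_div]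
      refine Finset.sum_congr rfl fun j _ => ?_
      rw [div_pow, htkey p.1 hx j, mul_div_assoc]
    rw [hsum]
    have h2 : ∑ j, εv j * p.2 j ^ (2^(k j)) = -(ε * ∑ i, p.1 i ^ (2^N)) := by linarith
    rw [h2]
    field_simp
    ring
  refine ⟨{
    toFun := fun p =>
      if hx : (p : (Fin r → ℝ) × (Fin s → ℝ)).1 = 0 then
        Sum.inr ⟨p.1.2, by
          have hp := p.2
          simp only [Set.mem_setOf_eq] at hp ⊢
          rw [hx] at hp
          simpa [zero_pow hNe] using hp⟩
      else
        Sum.inl ⟨⟨p.1.1, hx⟩, ⟨fun j => p.1.2 j / t p.1.1 j, by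
          have hp := p.2
          simp only [Set.mem_setOf_eq] at hp ⊢
          exact hmemz p.1 hp hx⟩⟩,
    invFun := fun q =>
      match q with
      | Sum.inl ⟨⟨x, hx⟩, ⟨z, hz⟩⟩ => ⟨(x, fun j => z j * t x j), by
          simp only [Set.mem_setOf_eq] at hz ⊢
          have : ∑ j, εv j * (z j * t x j) ^ (2^(k j))
              = (∑ j, εv j * z j ^ (2^(k j))) * (∑ i, x i ^ (2^N)) := by
            rw [Finset.sum_mul]
            refine Finset.sum_congr rfl fun j _ => ?_
            rw [mul_pow, htkey x hx j]; ring
          rw [this]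
          have h2 : ∑ j, εv j * z j ^ (2^(k j)) = -ε := by linarith
          rw [h2]; ring⟩
      | Sum.inr ⟨y, hy⟩ => ⟨((0 : Fin r → ℝ), y), by
          simp only [Set.mem_setOf_eq] at hy ⊢
          simpa [zero_pow hNe] using hy⟩,
    left_inv := by
      rintro ⟨⟨x, y⟩, hp⟩
      by_cases hx : x = 0
      · simp only [dif_pos hx]
        exact Subtype.ext (Prod.ext hx.symm rfl)
      · simp only [dif_neg hx]
        refine Subtype.ext (Prod.ext rfl ?_)
        funext j
        exact div_mul_cancel₀ _ (htpos x hx j).ne',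
    right_inv := by
      rintro (⟨⟨x, hx⟩, ⟨z, hz⟩⟩ | ⟨y, hy⟩)
      · simp only [dif_neg hx]
        congr 1
        refine Prod.ext rfl (Subtype.ext ?_)
        funext j
        exact mul_div_cancel_right₀ _ (htpos x hx j).ne'
      · simp }⟩
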